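/- For every k ≥ 1 the operators E_k^* = Σ_{i=1}^n x_i (∂/∂y_i)^k and F_k^* = Σ_{i=1}^n y_i (∂/∂x_i)^k map the space of diagonal harmonics DH_n into itself. -/

import Mathlib

open MvPolynomial

/-- The polynomial ring `R = ℂ[x_1,…,x_n,y_1,…,y_n]`: the variable `x_i` is
`X (Sum.inl i)` and `y_i` is `X (Sum.inr i)`. -/
abbrev Rn (n : ℕ) : Type := MvPolynomial (Fin n ⊕ Fin n) ℂ

/-- The diagonal action of a permutation `σ ∈ S_n` on `R`, permuting the `x_i` and the
`y_i` simultaneously. -/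
noncomputable def permR (n : ℕ) (σ : Equiv.Perm (Fin n)) : Rn n →ₐ[ℂ] Rn n :=
  MvPolynomial.rename (Sum.map σ σ)

/-- A polynomial is symmetric if it is fixed by the diagonal `S_n`-action. -/
def IsSymP {n : ℕ} (f : Rn n) : Prop := ∀ σ : Equiv.Perm (Fin n), permR n σ f = f

/-- A polynomial is antisymmetric if every permutation acts on it by its sign. -/
def IsAntiSymP {n : ℕ} (f : Rn n) : Prop :=
  ∀ σ : Equiv.Perm (Fin n), permR n σ f = (Equiv.Perm.sign σ : ℤ) • f

/-- The ideal `I_+` generated by all symmetric polynomials with zero constant term. -/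
noncomputable def Iplus (n : ℕ) : Ideal (Rn n) :=
  Ideal.span {f | IsSymP f ∧ constantCoeff f = 0}

/-- The ideal `J` generated by all antisymmetric polynomials. -/
noncomputable def Jid (n : ℕ) : Ideal (Rn n) :=
  Ideal.span {f | IsAntiSymP f}

/-- The maximal homogeneous ideal `m = (x_1,…,x_n,y_1,…,y_n)`. -/
noncomputable def mId (n : ℕ) : Ideal (Rn n) :=
  Ideal.span (Set.range X)

/-- The operator `E_k = Σ_i y_i^k ∂/∂x_i`. -/
noncomputable def Eop (n k : ℕ) : Rn n →ₗ[ℂ] Rn n :=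
  ∑ i : Fin n,
    (LinearMap.mulLeft ℂ ((X (Sum.inr i) : Rn n) ^ k)) ∘ₗ (pderiv (Sum.inl i)).toLinearMap

/-- The operator `F_k = Σ_i x_i^k ∂/∂y_i`. -/
noncomputable def Fop (n k : ℕ) : Rn n →ₗ[ℂ] Rn n :=
  ∑ i : Fin n,
    (LinearMap.mulLeft ℂ ((X (Sum.inl i) : Rn n) ^ k)) ∘ₗ (pderiv (Sum.inr i)).toLinearMap

/-- The operator `E_k^* = Σ_i x_i (∂/∂y_i)^k`. -/
noncomputable def Estar (n k : ℕ) : Rn n →ₗ[ℂ] Rn n :=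
  ∑ i : Fin n,
    (LinearMap.mulLeft ℂ ((X (Sum.inl i) : Rn n))) ∘ₗ ((pderiv (Sum.inr i)).toLinearMap ^ k)

/-- The operator `F_k^* = Σ_i y_i (∂/∂x_i)^k`. -/
noncomputable def Fstar (n k : ℕ) : Rn n →ₗ[ℂ] Rn n :=
  ∑ i : Fin n,
    (LinearMap.mulLeft ℂ ((X (Sum.inr i) : Rn n))) ∘ₗ ((pderiv (Sum.inl i)).toLinearMap ^ k)

/-- The constant-coefficient differential operator `g(∂/∂x_1,…,∂/∂x_n,∂/∂y_1,…,∂/∂y_n)`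
obtained by substituting partial derivatives for the variables of `g`. -/
noncomputable def applyDeriv (n : ℕ) (g : Rn n) : Module.End ℂ (Rn n) :=
  ∑ s ∈ g.support, (MvPolynomial.coeff s g) •
    (((Finset.univ : Finset (Fin n ⊕ Fin n)).toList).map
      (fun j => ((pderiv j).toLinearMap : Module.End ℂ (Rn n)) ^ (s j))).prod

/-- The space of diagonal harmonics `DH_n`. -/
def DH (n : ℕ) : Set (Rn n) :=
  {f | ∀ g : Rn n, IsSymP g → constantCoeff g = 0 → applyDeriv n g f = 0}

/-- The Vandermonde determinant `Δ(x) = ∏_{i<j}(x_i − x_j)`. -/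
noncomputable def Dx (n : ℕ) : Rn n :=
  ∏ p ∈ Finset.univ.filter (fun p : Fin n × Fin n => p.1 < p.2),
    (X (Sum.inl p.1) - X (Sum.inl p.2))

/-- The Vandermonde determinant `Δ(y) = ∏_{i<j}(y_i − y_j)`. -/
noncomputable def Dy (n : ℕ) : Rn n :=
  ∏ p ∈ Finset.univ.filter (fun p : Fin n × Fin n => p.1 < p.2),
    (X (Sum.inr p.1) - X (Sum.inr p.2))

/-- Evaluation of a polynomial `φ` in `m` commuting variables on a family of `m`
pairwise commuting endomorphisms. -/
noncomputable def evalEndo {V : Type*} [AddCommMonoid V] [Module ℂ V] {m : ℕ}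
    (T : Fin m → Module.End ℂ V) (φ : MvPolynomial (Fin m) ℂ) : Module.End ℂ V :=
  ∑ s ∈ φ.support, (MvPolynomial.coeff s φ) •
    (((List.finRange m).map (fun j => (T j) ^ (s j))).prod)

/-- Weights recording the bigrading of `R`: an `x`-variable has bidegree `(1,0)` and a
`y`-variable has bidegree `(0,1)`. -/
def wtB (n : ℕ) : Fin n ⊕ Fin n → ℕ × ℕ :=
  Sum.elim (fun _ => ((1 : ℕ), (0 : ℕ))) (fun _ => ((0 : ℕ), (1 : ℕ)))

/-- Bihomogeneity of bidegree `d = (d_x, d_y)` with respect to the bigrading of `R`. -/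
def BiHom (n : ℕ) (f : Rn n) (d : ℕ × ℕ) : Prop :=
  MvPolynomial.IsWeightedHomogeneous (wtB n) f d

/-! ### Auxiliary material for `stmt9` -/

section Aux

/-- Partial derivative as an endomorphism. -/
noncomputable def Dop (n : ℕ) (j : Fin n ⊕ Fin n) : Module.End ℂ (Rn n) :=
  (pderiv j).toLinearMap

/-- Multiplication by a variable as an endomorphism. -/
noncomputable def Mop (n : ℕ) (j : Fin n ⊕ Fin n) : Module.End ℂ (Rn n) :=
  LinearMap.mulLeft ℂ (X j)

/-- The product of powers of partial derivatives along a list of variables. -/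
noncomputable def Qp (n : ℕ) (s : (Fin n ⊕ Fin n) →₀ ℕ) (L : List (Fin n ⊕ Fin n)) :
    Module.End ℂ (Rn n) := (L.map fun j => Dop n j ^ (s j)).prod

noncomputable abbrev Lu (n : ℕ) : List (Fin n ⊕ Fin n) :=
  (Finset.univ : Finset (Fin n ⊕ Fin n)).toList

lemma D_comm (n : ℕ) (i j : Fin n ⊕ Fin n) : Commute (Dop n i) (Dop n j) := by
  refine LinearMap.ext fun f => ?_
  induction f using MvPolynomial.induction_on' with
  | monomial s c =>
    simp only [Dop, Module.End.mul_apply, Derivation.coeFn_coe, pderiv_monomial]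
    rcases eq_or_ne i j with rfl | h
    · rfl
    · rw [tsub_right_comm]
      congr 1
      rw [Finsupp.tsub_apply, Finsupp.tsub_apply, Finsupp.single_apply, Finsupp.single_apply,
        if_neg h, if_neg (Ne.symm h)]
      simp only [Nat.sub_zero]; ring
  | add p q hp hq =>
    simp only [Module.End.mul_apply] at *
    simp [map_add, hp, hq]

lemma DM_comm (n : ℕ) (i j : Fin n ⊕ Fin n) (h : i ≠ j) : Commute (Dop n i) (Mop n j) := by
  refine LinearMap.ext fun f => ?_
  simp only [Dop, Mop, Module.End.mul_apply, Derivation.coeFn_coe, LinearMap.mulLeft_apply]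
  rw [pderiv_mul, pderiv_X_of_ne (Ne.symm h)]
  simp

lemma DM_self (n : ℕ) (i : Fin n ⊕ Fin n) : Dop n i * Mop n i = Mop n i * Dop n i + 1 := by
  refine LinearMap.ext fun f => ?_
  simp only [Dop, Mop, Module.End.mul_apply, LinearMap.add_apply, Derivation.coeFn_coe,
    LinearMap.mulLeft_apply, Module.End.one_apply]
  rw [pderiv_mul, pderiv_X_self]
  ring

lemma DpowM (n : ℕ) (i : Fin n ⊕ Fin n) (m : ℕ) :
    Dop n i ^ m * Mop n i = Mop n i * Dop n i ^ m + (m : ℂ) • Dop n i ^ (m - 1) := by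
  induction m with
  | zero => simp
  | succ m ih =>
    have : Dop n i ^ (m + 1) * Mop n i = Dop n i * (Dop n i ^ m * Mop n i) := by
      rw [pow_succ', mul_assoc]
    rw [this, ih, mul_add, ← mul_assoc, DM_self, add_mul, one_mul, mul_smul_comm]
    rcases Nat.eq_zero_or_pos m with rfl | hm
    · simp [mul_assoc, pow_succ']
    · rw [← pow_succ', Nat.sub_add_cancel hm, Nat.add_sub_cancel]
      push_cast
      rw [add_smul, one_smul, mul_assoc, ← pow_succ']
      abel

lemma Qp_congr {n : ℕ} {s t : (Fin n ⊕ Fin n) →₀ ℕ} {L : List (Fin n ⊕ Fin n)}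
    (h : ∀ j ∈ L, s j = t j) : Qp n s L = Qp n t L := by
  unfold Qp
  congr 1
  exact List.map_congr_left fun j hj => by rw [h j hj]

lemma D_comm_Qp (n : ℕ) (j : Fin n ⊕ Fin n) (m : ℕ) (s : (Fin n ⊕ Fin n) →₀ ℕ)
    (L : List (Fin n ⊕ Fin n)) : Commute (Dop n j ^ m) (Qp n s L) := by
  apply Commute.list_prod_right
  intro y hy
  simp only [List.mem_map] at hy
  obtain ⟨a, _, rfl⟩ := hy
  exact (D_comm n j a).pow_pow m (s a)

lemma M_comm_Qp (n : ℕ) (i : Fin n ⊕ Fin n) (s : (Fin n ⊕ Fin n) →₀ ℕ)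
    {L : List (Fin n ⊕ Fin n)} (hi : i ∉ L) : Commute (Mop n i) (Qp n s L) := by
  apply Commute.list_prod_right
  intro y hy
  simp only [List.mem_map] at hy
  obtain ⟨a, ha, rfl⟩ := hy
  exact ((DM_comm n a i (fun h => hi (h ▸ ha))).symm).pow_right (s a)

lemma Qp_cons (n : ℕ) (s : (Fin n ⊕ Fin n) →₀ ℕ) (a : Fin n ⊕ Fin n)
    (L : List (Fin n ⊕ Fin n)) : Qp n s (a :: L) = Dop n a ^ (s a) * Qp n s L := by
  simp [Qp]

lemma Qp_M {n : ℕ} (i : Fin n ⊕ Fin n) (s : (Fin n ⊕ Fin n) →₀ ℕ)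
    {L : List (Fin n ⊕ Fin n)} (hnd : L.Nodup) (hi : i ∈ L) :
    Qp n s L * Mop n i =
      Mop n i * Qp n s L + ((s i : ℂ)) • Qp n (s - Finsupp.single i 1) L := by
  induction L with
  | nil => simp at hi
  | cons a L ih =>
    rcases List.nodup_cons.mp hnd with ⟨haL, hndL⟩
    rcases eq_or_ne i a with rfl | hne
    · have h1 : Qp n s L * Mop n i = Mop n i * Qp n s L := ((M_comm_Qp n i s haL).symm).eq
      have h2 : Qp n (s - Finsupp.single i 1) L = Qp n s L := by
        refine Qp_congr fun j hj => ?_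
        rw [Finsupp.tsub_apply, Finsupp.single_apply, if_neg (fun h : i = j => haL (h ▸ hj))]
        simp
      have e1 : ((s - Finsupp.single i 1 : (Fin n ⊕ Fin n) →₀ ℕ)) i = s i - 1 := by
        rw [Finsupp.tsub_apply, Finsupp.single_apply, if_pos rfl]
      simp only [Qp_cons, h2, e1]
      rw [mul_assoc, h1, ← mul_assoc, DpowM, add_mul, smul_mul_assoc, mul_assoc]
    · have hiL : i ∈ L := by
        rcases List.mem_cons.mp hi with h | h
        · exact absurd h hne
        · exact h
      have e2 : ((s - Finsupp.single i 1 : (Fin n ⊕ Fin n) →₀ ℕ)) a = s a := by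
        rw [Finsupp.tsub_apply, Finsupp.single_apply, if_neg hne]
        simp
      simp only [Qp_cons, e2]
      rw [mul_assoc, ih hndL hiL, mul_add, ← mul_assoc,
        ((DM_comm n a i (Ne.symm hne)).pow_left (s a)).eq, mul_assoc, mul_smul_comm]

lemma Qp_add_single {n : ℕ} (j : Fin n ⊕ Fin n) (k : ℕ) (s : (Fin n ⊕ Fin n) →₀ ℕ)
    {L : List (Fin n ⊕ Fin n)} (hnd : L.Nodup) (hj : j ∈ L) :
    Qp n (Finsupp.single j k + s) L = Dop n j ^ k * Qp n s L := by
  induction L with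
  | nil => simp at hj
  | cons a L ih =>
    rcases List.nodup_cons.mp hnd with ⟨haL, hndL⟩
    rcases eq_or_ne j a with rfl | hne
    · have h2 : Qp n (Finsupp.single j k + s) L = Qp n s L := by
        refine Qp_congr fun j' hj' => ?_
        rw [Finsupp.add_apply, Finsupp.single_apply, if_neg (fun h : j = j' => haL (h ▸ hj'))]
        simp
      have e1 : ((Finsupp.single j k + s : (Fin n ⊕ Fin n) →₀ ℕ)) j = k + s j := by
        rw [Finsupp.add_apply, Finsupp.single_eq_same]
      rw [Qp_cons, Qp_cons, h2, e1, pow_add, mul_assoc]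
    · have hjL : j ∈ L := by
        rcases List.mem_cons.mp hj with h | h
        · exact absurd h hne
        · exact h
      have e2 : ((Finsupp.single j k + s : (Fin n ⊕ Fin n) →₀ ℕ)) a = s a := by
        rw [Finsupp.add_apply, Finsupp.single_apply, if_neg hne]
        simp
      rw [Qp_cons, Qp_cons, e2, ih hndL hjL, ← mul_assoc, ← mul_assoc,
        ((D_comm n a j).pow_pow (s a) k).eq]

lemma applyDeriv_eq (n : ℕ) (g : Rn n) :
    applyDeriv n g = ∑ s ∈ g.support, (MvPolynomial.coeff s g) • Qp n s (Lu n) := rfl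

lemma applyDeriv_def (n : ℕ) (g : Rn n) :
    applyDeriv n g = Finsupp.sum (AddMonoidAlgebra.coeff g) (fun s c => c • Qp n s (Lu n)) := by
  rw [applyDeriv_eq, MvPolynomial.sum_def]

lemma applyDeriv_monomial (n : ℕ) (s : (Fin n ⊕ Fin n) →₀ ℕ) (c : ℂ) :
    applyDeriv n (monomial s c) = c • Qp n s (Lu n) := by
  rw [applyDeriv_def]
  exact sum_monomial_eq (by simp)

lemma applyDeriv_add (n : ℕ) (g h : Rn n) :
    applyDeriv n (g + h) = applyDeriv n g + applyDeriv n h := by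
  rw [applyDeriv_def, applyDeriv_def, applyDeriv_def, AddMonoidAlgebra.coeff_add]
  exact Finsupp.sum_add_index' (by simp) (fun s c d => by rw [add_smul])

/-- `applyDeriv` bundled as an additive monoid hom. -/
noncomputable def applyDerivHom (n : ℕ) : Rn n →+ Module.End ℂ (Rn n) where
  toFun := applyDeriv n
  map_zero' := by rw [applyDeriv_def, AddMonoidAlgebra.coeff_zero]; exact Finsupp.sum_zero_index
  map_add' := applyDeriv_add n

lemma applyDeriv_sum {n : ℕ} {ι : Type*} (t : Finset ι) (F : ι → Rn n) :
    applyDeriv n (∑ i ∈ t, F i) = ∑ i ∈ t, applyDeriv n (F i) :=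
  map_sum (applyDerivHom n) F t

lemma D_comm_applyDeriv (n : ℕ) (j : Fin n ⊕ Fin n) (k : ℕ) (g : Rn n) :
    Commute (Dop n j ^ k) (applyDeriv n g) := by
  rw [applyDeriv_eq]
  refine Commute.sum_right _ _ _ fun s _ => ?_
  exact (D_comm_Qp n j k s (Lu n)).smul_right _

lemma mem_Lu {n : ℕ} (j : Fin n ⊕ Fin n) : j ∈ Lu n :=
  Finset.mem_toList.mpr (Finset.mem_univ j)

lemma nodup_Lu (n : ℕ) : (Lu n).Nodup := Finset.nodup_toList _

lemma applyDeriv_M (n : ℕ) (g : Rn n) (i : Fin n ⊕ Fin n) :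
    applyDeriv n g * Mop n i =
      Mop n i * applyDeriv n g + applyDeriv n (pderiv i g) := by
  induction g using MvPolynomial.induction_on' with
  | monomial s c =>
    rw [pderiv_monomial, applyDeriv_monomial, applyDeriv_monomial, smul_mul_assoc,
      Qp_M i s (nodup_Lu n) (mem_Lu i), smul_add, mul_smul_comm, smul_smul]
  | add p q hp hq =>
    rw [applyDeriv_add, map_add, applyDeriv_add, add_mul, hp, hq, mul_add]
    abel

lemma applyDeriv_Xpow_mul (n : ℕ) (j : Fin n ⊕ Fin n) (k : ℕ) (h : Rn n) :
    applyDeriv n ((X j : Rn n) ^ k * h) = Dop n j ^ k * applyDeriv n h := by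
  induction h using MvPolynomial.induction_on' with
  | monomial s c =>
    rw [X_pow_eq_monomial, monomial_mul, one_mul, applyDeriv_monomial, applyDeriv_monomial,
      Qp_add_single j k s (nodup_Lu n) (mem_Lu j), mul_smul_comm]
  | add p q hp hq =>
    rw [mul_add, applyDeriv_add, applyDeriv_add, hp, hq, mul_add]

lemma sumMap_injective {n : ℕ} (σ : Equiv.Perm (Fin n)) :
    Function.Injective (Sum.map (σ : Fin n → Fin n) (σ : Fin n → Fin n)) :=
  Sum.map_injective.mpr ⟨σ.injective, σ.injective⟩

/-- Symmetry of the "polarized" polynomial `∑ i, X(b i)^k * ∂_{a i} g`. -/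
lemma polarized_sym {n : ℕ} (k : ℕ) (a b : Fin n → Fin n ⊕ Fin n)
    (ha : ∀ (σ : Equiv.Perm (Fin n)) (i : Fin n), Sum.map σ σ (a i) = a (σ i))
    (hb : ∀ (σ : Equiv.Perm (Fin n)) (i : Fin n), Sum.map σ σ (b i) = b (σ i))
    (g : Rn n) (hg : IsSymP g) :
    IsSymP (∑ i : Fin n, (X (b i) : Rn n) ^ k * pderiv (a i) g) := by
  intro σ
  rw [map_sum]
  have hgσ : permR n σ g = g := hg σ
  have key : ∀ i : Fin n,
      permR n σ ((X (b i) : Rn n) ^ k * pderiv (a i) g)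
        = (X (b (σ i)) : Rn n) ^ k * pderiv (a (σ i)) g := by
    intro i
    rw [map_mul, map_pow]
    have h1 : permR n σ (X (b i) : Rn n) = X (b (σ i)) := by
      rw [permR, rename_X, hb σ i]
    have h2 : permR n σ (pderiv (a i) g) = pderiv (a (σ i)) g := by
      have hp := pderiv_rename (sumMap_injective σ) (a i) g
      show rename (Sum.map (σ : Fin n → Fin n) (σ : Fin n → Fin n)) (pderiv (a i) g) = _
      rw [← hp, ha σ i]
      congr 1
    rw [h1, h2]
  calc (∑ i : Fin n, permR n σ ((X (b i) : Rn n) ^ k * pderiv (a i) g))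
      = ∑ i : Fin n, (X (b (σ i)) : Rn n) ^ k * pderiv (a (σ i)) g := by
        exact Finset.sum_congr rfl fun i _ => key i
    _ = ∑ i : Fin n, (X (b i) : Rn n) ^ k * pderiv (a i) g :=
        Equiv.sum_comp σ (fun i => (X (b i) : Rn n) ^ k * pderiv (a i) g)

lemma polarized_cc {n : ℕ} (k : ℕ) (hk : 1 ≤ k) (a b : Fin n → Fin n ⊕ Fin n) (g : Rn n) :
    constantCoeff (∑ i : Fin n, (X (b i) : Rn n) ^ k * pderiv (a i) g) = 0 := by
  rw [map_sum]
  refine Finset.sum_eq_zero fun i _ => ?_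
  rw [map_mul, map_pow, constantCoeff_X, zero_pow (by omega), zero_mul]

/-- The generic form of the main statement. -/
lemma star_mem_DH {n : ℕ} (k : ℕ) (hk : 1 ≤ k) (a b : Fin n → Fin n ⊕ Fin n)
    (ha : ∀ (σ : Equiv.Perm (Fin n)) (i : Fin n), Sum.map σ σ (a i) = a (σ i))
    (hb : ∀ (σ : Equiv.Perm (Fin n)) (i : Fin n), Sum.map σ σ (b i) = b (σ i))
    (f : Rn n) (hf : f ∈ DH n) :
    ((∑ i : Fin n,
        (LinearMap.mulLeft ℂ ((X (a i) : Rn n))) ∘ₗ ((pderiv (b i)).toLinearMap ^ k)) f)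
      ∈ DH n := by
  intro g hg hcc
  rw [LinearMap.sum_apply, map_sum]
  have term_eq : ∀ i : Fin n,
      applyDeriv n g
        (((LinearMap.mulLeft ℂ ((X (a i) : Rn n))) ∘ₗ ((pderiv (b i)).toLinearMap ^ k)) f)
        = applyDeriv n ((X (b i) : Rn n) ^ k * pderiv (a i) g) f := by
    intro i
    have h1 : applyDeriv n g
        (((LinearMap.mulLeft ℂ ((X (a i) : Rn n))) ∘ₗ ((pderiv (b i)).toLinearMap ^ k)) f)
        = (applyDeriv n g * Mop n (a i)) ((Dop n (b i) ^ k) f) := rfl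
    rw [h1, applyDeriv_M, LinearMap.add_apply]
    have h2 : applyDeriv n g ((Dop n (b i) ^ k) f) = 0 := by
      calc applyDeriv n g ((Dop n (b i) ^ k) f)
          = (applyDeriv n g * Dop n (b i) ^ k) f := rfl
        _ = (Dop n (b i) ^ k * applyDeriv n g) f := by
            rw [← (D_comm_applyDeriv n (b i) k g).eq]
        _ = (Dop n (b i) ^ k) (applyDeriv n g f) := rfl
        _ = 0 := by rw [hf g hg hcc, map_zero]
    have h3 : applyDeriv n (pderiv (a i) g) ((Dop n (b i) ^ k) f)
        = applyDeriv n ((X (b i) : Rn n) ^ k * pderiv (a i) g) f := by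
      rw [applyDeriv_Xpow_mul]
      calc applyDeriv n (pderiv (a i) g) ((Dop n (b i) ^ k) f)
          = (applyDeriv n (pderiv (a i) g) * Dop n (b i) ^ k) f := rfl
        _ = (Dop n (b i) ^ k * applyDeriv n (pderiv (a i) g)) f := by
            rw [← (D_comm_applyDeriv n (b i) k (pderiv (a i) g)).eq]
    rw [Module.End.mul_apply, h2, map_zero, zero_add, h3]
  calc (∑ i : Fin n, applyDeriv n g
          (((LinearMap.mulLeft ℂ ((X (a i) : Rn n))) ∘ₗ ((pderiv (b i)).toLinearMap ^ k)) f))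
      = ∑ i : Fin n, applyDeriv n ((X (b i) : Rn n) ^ k * pderiv (a i) g) f :=
        Finset.sum_congr rfl fun i _ => term_eq i
    _ = applyDeriv n (∑ i : Fin n, (X (b i) : Rn n) ^ k * pderiv (a i) g) f := by
        rw [applyDeriv_sum, LinearMap.sum_apply]
    _ = 0 := hf _ (polarized_sym k a b ha hb g hg) (polarized_cc k hk a b g)

end Aux

theorem stmt9 (n : ℕ) (hn : 1 ≤ n) :
    ∀ k : ℕ, 1 ≤ k → ∀ f ∈ DH n, Estar n k f ∈ DH n ∧ Fstar n k f ∈ DH n := by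
  intro k hk f hf
  constructor
  · exact star_mem_DH k hk Sum.inl Sum.inr (fun σ i => rfl) (fun σ i => rfl) f hf
  · exact star_mem_DH k hk Sum.inr Sum.inl (fun σ i => rfl) (fun σ i => rfl) f hf
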